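/- Let N = 2^{2m} - 1 and let s be a binary sequence of period N whose autocorrelation satisfies AC(τ) = -1 for τ ∈ {(2^m+1)τ_1 : 1 ≤ τ_1 ≤ 2^m - 2} and AC(τ) = 3 for all other nonzero τ. Then, with S(2) = Σ s_i 2^i and T(2^{-1}) interpreted via 2^{-1} ≡ 2^{N-1} (mod 2^N - 1), one has S(2)·T(2^{-1}) ≡ -2(2^{2m-2} - (2^N - 1)/(2^{2^m+1} - 1)) (mod 2^N - 1). -/

import Mathlib

open Finset

lemma aux_pow_mod {R : Type*} [Monoid R] {x : R} {N : ℕ} (hx : x ^ N = 1) (a : ℕ) :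
    x ^ a = x ^ (a % N) := by
  conv_lhs => rw [← Nat.div_add_mod a N]
  rw [pow_add, pow_mul, hx, one_pow, one_mul]

lemma aux_pow_congr {R : Type*} [Monoid R] {x : R} {N : ℕ} (hx : x ^ N = 1) {a b : ℕ}
    (h : a % N = b % N) : x ^ a = x ^ b := by
  rw [aux_pow_mod hx a, aux_pow_mod hx b, h]

lemma aux_per_mul {s : ℕ → ℕ} {N : ℕ} (hper : ∀ i, s (i + N) = s i) (k i : ℕ) :
    s (i + k * N) = s i := by
  induction k with
  | zero => simp
  | succ k ih => rw [Nat.succ_mul, ← Nat.add_assoc, hper, ih]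

lemma aux_per_mod {s : ℕ → ℕ} {N : ℕ} (hper : ∀ i, s (i + N) = s i) (a : ℕ) :
    s (a % N) = s a := by
  conv_rhs => rw [← Nat.mod_add_div a N, Nat.mul_comm]
  rw [aux_per_mul hper]

lemma aux_left_inv {N j a : ℕ} (hj : j < N) (ha : a < N) : (j + (a + N - j) % N) % N = a := by
  rcases Nat.lt_or_ge a j with h | h
  · have hin : (a + N - j) % N = a + N - j := Nat.mod_eq_of_lt (by omega)
    rw [hin, show j + (a + N - j) = a + N by omega, Nat.add_mod_right, Nat.mod_eq_of_lt ha]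
  · have hin : (a + N - j) % N = a - j := by
      rw [show a + N - j = (a - j) + N by omega, Nat.add_mod_right, Nat.mod_eq_of_lt (by omega)]
    rw [hin, Nat.mod_eq_of_lt (by omega)]
    omega

lemma aux_sum_shift {M : Type*} [AddCommMonoid M] (f : ℕ → M) (N j : ℕ) (hj : j < N) :
    ∑ i ∈ range N, f i = ∑ τ ∈ range N, f ((j + τ) % N) := by
  have hN : 0 < N := by omega
  refine Finset.sum_nbij' (fun i => (i + N - j) % N) (fun τ => (j + τ) % N) ?_ ?_ ?_ ?_ ?_
  · intro a ha; exact mem_range.mpr (Nat.mod_lt _ hN)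
  · intro a ha; exact mem_range.mpr (Nat.mod_lt _ hN)
  all_goals
    intro a ha
    simp only [mem_range] at ha
  · exact aux_left_inv hj ha
  · rcases Nat.lt_or_ge (j + a) N with h | h
    · have hin : (j + a) % N = j + a := Nat.mod_eq_of_lt h
      rw [hin, show j + a + N - j = a + N by omega, Nat.add_mod_right, Nat.mod_eq_of_lt ha]
    · have hin : (j + a) % N = j + a - N := by
        rw [Nat.mod_eq_sub_mod h, Nat.mod_eq_of_lt (by omega)]
      rw [hin, Nat.mod_eq_of_lt (by omega)]
      omega
  · rw [aux_left_inv hj ha]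

lemma aux_geom_int (n : ℕ) : ∑ i ∈ range n, (2 : ℤ) ^ i = 2 ^ n - 1 := by
  induction n with
  | zero => simp
  | succ n ih => rw [Finset.sum_range_succ, ih, pow_succ]; ring

theorem S_T_congruence (m : ℕ) (hm : 2 ≤ m) (N : ℕ) (hN : N = 2 ^ (2 * m) - 1)
    (s : ℕ → ℕ) (hbin : ∀ i, s i = 0 ∨ s i = 1) (hper : ∀ i, s (i + N) = s i)
    (hAC : ∀ τ : ℕ, 0 < τ → τ < N →
      ((∃ τ₁ : ℕ, 1 ≤ τ₁ ∧ τ₁ ≤ 2 ^ m - 2 ∧ τ = (2 ^ m + 1) * τ₁) →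
        (∑ i ∈ Finset.range N, (-1 : ℤ) ^ (s i + s (i + τ))) = -1) ∧
      ((¬ ∃ τ₁ : ℕ, 1 ≤ τ₁ ∧ τ₁ ≤ 2 ^ m - 2 ∧ τ = (2 ^ m + 1) * τ₁) →
        (∑ i ∈ Finset.range N, (-1 : ℤ) ^ (s i + s (i + τ))) = 3)) :
    (∑ i ∈ Finset.range N, (s i : ℤ) * 2 ^ i) *
      (∑ j ∈ Finset.range N, (-1 : ℤ) ^ (s j) * 2 ^ ((N - 1) * j)) ≡
    -2 * (2 ^ (2 * m - 2) - ((2 ^ N - 1) / (2 ^ (2 ^ m + 1) - 1) : ℤ))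
      [ZMOD (2 ^ N - 1)] := by
  have hm4 : 4 ≤ 2 ^ m := by
    calc 4 = 2 ^ 2 := by norm_num
    _ ≤ 2 ^ m := Nat.pow_le_pow_right (by norm_num) hm
  have h2m : 2 ^ (2 * m) = 2 ^ m * 2 ^ m := by rw [two_mul, pow_add]
  have hNpos : 0 < N := by
    rw [hN]; have : 16 ≤ 2 ^ m * 2 ^ m := by nlinarith
    omega
  -- the natural modulus
  set M' : ℕ := 2 ^ N - 1 with hM'
  have h2Npos : 1 ≤ 2 ^ N := Nat.one_le_two_pow
  have hcastmod : (2 ^ N - 1 : ℤ) = ((M' : ℕ) : ℤ) := by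
    rw [hM']; push_cast [h2Npos]; ring
  rw [hcastmod, ← ZMod.intCast_eq_intCast_iff]
  -- now work in R
  set R := ZMod M' with hR
  have hx : (2 : R) ^ N = 1 := by
    have h1 : ((2 ^ N : ℕ) : R) = ((M' + 1 : ℕ) : R) := by
      congr 1; omega
    push_cast at h1
    rw [h1, ZMod.natCast_self, zero_add]
  have hgeoR : ∑ i ∈ range N, (2 : R) ^ i = 0 := by
    have := congrArg (fun z : ℤ => (z : R)) (aux_geom_int N)
    rw [Int.cast_sum] at this
    push_cast at this
    rw [this, hx, sub_self]
  have h2u : IsUnit (2 : R) := by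
    refine IsUnit.of_mul_eq_one (a := 2) (2 ^ (N - 1)) ?_
    rw [← pow_succ']
    rw [show N - 1 + 1 = N by omega, hx]
  -- the value Q
  set Qz : ℤ := ((2 ^ N - 1) / (2 ^ (2 ^ m + 1) - 1) : ℤ) with hQz
  have hexpN : (2 ^ m + 1) * (2 ^ m - 1) = N := by
    obtain ⟨b, hb⟩ : ∃ b, 2 ^ m = b + 1 := ⟨2 ^ m - 1, by omega⟩
    rw [hN, h2m, hb, Nat.add_sub_cancel]
    have : (b + 1) * (b + 1) = (b + 1 + 1) * b + 1 := by ring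
    omega
  have hQsum : Qz = ∑ k ∈ range (2 ^ m - 1), (2 : ℤ) ^ ((2 ^ m + 1) * k) := by
    have key : (∑ k ∈ range (2 ^ m - 1), ((2 : ℤ) ^ (2 ^ m + 1)) ^ k) *
        ((2 : ℤ) ^ (2 ^ m + 1) - 1) = ((2 : ℤ) ^ (2 ^ m + 1)) ^ (2 ^ m - 1) - 1 :=
      geom_sum_mul _ _
    rw [← pow_mul, hexpN] at key
    have hne : ((2 : ℤ) ^ (2 ^ m + 1) - 1) ≠ 0 := by
      have : (2 : ℤ) ≤ 2 ^ (2 ^ m + 1) := by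
        calc (2:ℤ) = 2 ^ 1 := by norm_num
        _ ≤ 2 ^ (2 ^ m + 1) := by apply pow_le_pow_right₀ <;> omega
      omega
    rw [hQz, ← key, Int.mul_ediv_cancel _ hne]
    refine Finset.sum_congr rfl fun k _ => ?_
    rw [← pow_mul]
  have hQR : ((Qz : ℤ) : R) = ∑ k ∈ range (2 ^ m - 1), (2 : R) ^ ((2 ^ m + 1) * k) := by
    rw [hQsum, Int.cast_sum]; push_cast; rfl
  push_cast
  rw [← hcastmod, ← hQz]
  -- abbreviations
  set A : R := ∑ i ∈ Finset.range N, ((s i : ℕ) : R) * 2 ^ i with hA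
  set B : R := ∑ j ∈ Finset.range N, (-1 : R) ^ (s j) * 2 ^ ((N - 1) * j) with hB
  set C : R := ∑ i ∈ Finset.range N, (-1 : R) ^ (s i) * 2 ^ i with hC
  -- step 1 : 2A = geom - C
  have h2A : (2 : R) * A = (∑ i ∈ range N, (2 : R) ^ i) - C := by
    rw [hA, hC, Finset.mul_sum, ← Finset.sum_sub_distrib]
    refine Finset.sum_congr rfl fun i _ => ?_
    rcases hbin i with h | h <;> rw [h] <;> push_cast <;> ring
  -- the AC sums
  set F : ℕ → R := fun τ => ((∑ j ∈ range N, (-1 : ℤ) ^ (s j + s (j + τ)) : ℤ) : R) * 2 ^ τ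
    with hF
  have hCB : C * B = ∑ τ ∈ range N, F τ := by
    rw [hC, hB, Finset.sum_mul_sum, Finset.sum_comm]
    have hj : ∀ j ∈ range N,
        (∑ i ∈ range N, ((-1 : R) ^ (s i) * 2 ^ i) * ((-1) ^ (s j) * 2 ^ ((N - 1) * j)))
        = ∑ τ ∈ range N, (-1 : R) ^ (s j + s (j + τ)) * 2 ^ τ := by
      intro j hjm
      rw [mem_range] at hjm
      rw [aux_sum_shift (fun i => ((-1 : R) ^ (s i) * 2 ^ i) * ((-1) ^ (s j) * 2 ^ ((N - 1) * j)))
        N j hjm]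
      refine Finset.sum_congr rfl fun τ hτ => ?_
      rw [mem_range] at hτ
      have hs : s ((j + τ) % N) = s (j + τ) := aux_per_mod hper _
      have hpow : (2 : R) ^ ((j + τ) % N) * 2 ^ ((N - 1) * j) = 2 ^ τ := by
        rw [← pow_add]
        refine aux_pow_congr hx ?_
        have hmm : (N - 1) * j = N * j - j := Nat.sub_one_mul _ _
        have hle : j ≤ N * j := Nat.le_mul_of_pos_left j hNpos
        have h1 : (j + τ) % N ≡ j + τ [MOD N] := Nat.mod_modEq _ _
        have h2 : ((j + τ) % N + (N - 1) * j) % N = ((j + τ) + (N - 1) * j) % N :=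
          h1.add_right _
        have h3 : (j + τ) + (N - 1) * j = τ + N * j := by omega
        rw [h2, h3, Nat.add_mul_mod_self_left]
      rw [mul_mul_mul_comm, hpow, hs, pow_add, mul_comm ((-1 : R) ^ (s (j + τ))) _]
    rw [Finset.sum_congr rfl hj, Finset.sum_comm]
    refine Finset.sum_congr rfl fun τ _ => ?_
    rw [hF]
    simp only []
    rw [Int.cast_sum]
    push_cast
    rw [Finset.sum_mul]
  -- value at τ = 0
  have hF0 : F 0 = (N : R) := by
    rw [hF]
    simp only []
    have h1 : ∀ j ∈ range N, (-1 : ℤ) ^ (s j + s (j + 0)) = 1 := fun j _ => by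
      rw [Nat.add_zero]; exact Even.neg_one_pow ⟨s j, rfl⟩
    rw [Finset.sum_congr rfl h1]
    simp
  -- the exceptional set
  set D : Finset ℕ := (Finset.Icc 1 (2 ^ m - 2)).image (fun t => (2 ^ m + 1) * t) with hD
  have hDmem : ∀ τ, τ ∈ D ↔ ∃ τ₁, 1 ≤ τ₁ ∧ τ₁ ≤ 2 ^ m - 2 ∧ τ = (2 ^ m + 1) * τ₁ := by
    intro τ
    simp only [hD, Finset.mem_image, Finset.mem_Icc]
    constructor
    · rintro ⟨t, ⟨h1, h2⟩, rfl⟩; exact ⟨t, h1, h2, rfl⟩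
    · rintro ⟨t, h1, h2, rfl⟩; exact ⟨t, ⟨h1, h2⟩, rfl⟩
  have hDsub : D ⊆ Finset.Ico 1 N := by
    intro τ hτ
    rw [hDmem] at hτ
    obtain ⟨t, h1, h2, rfl⟩ := hτ
    rw [Finset.mem_Ico]
    have hle1 : (2 ^ m + 1) * 1 ≤ (2 ^ m + 1) * t := Nat.mul_le_mul_left _ h1
    have hle2 : (2 ^ m + 1) * t ≤ (2 ^ m + 1) * (2 ^ m - 2) := Nat.mul_le_mul_left _ h2
    have hlt : (2 ^ m + 1) * (2 ^ m - 2 + 1) = (2 ^ m + 1) * (2 ^ m - 2) + (2 ^ m + 1) := by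
      rw [Nat.mul_add, Nat.mul_one]
    have heq : 2 ^ m - 2 + 1 = 2 ^ m - 1 := by omega
    rw [heq] at hlt
    rw [← hexpN]
    omega
  -- F on Ico 1 N
  have hFD : ∀ τ ∈ Finset.Ico 1 N, F τ = (if τ ∈ D then (-1 : R) else 3) * 2 ^ τ := by
    intro τ hτ
    rw [Finset.mem_Ico] at hτ
    obtain ⟨hA1, hA2⟩ := hAC τ (by omega) hτ.2
    rw [hF]
    simp only []
    by_cases hd : τ ∈ D
    · rw [if_pos hd, hA1 ((hDmem τ).1 hd)]; push_cast; ring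
    · rw [if_neg hd, hA2 (fun h => hd ((hDmem τ).2 h))]; push_cast; ring
  -- geometric pieces
  have hIco2 : ∑ τ ∈ Finset.Ico 1 N, (2 : R) ^ τ = -1 := by
    have h := hgeoR
    rw [Finset.range_eq_Ico, Finset.sum_eq_sum_Ico_succ_bot hNpos, pow_zero] at h
    linear_combination h
  have hDsum : ∑ τ ∈ D, (2 : R) ^ τ = (Qz : R) - 1 := by
    rw [hD, Finset.sum_image (fun a _ b _ h => Nat.eq_of_mul_eq_mul_left (by positivity) h)]
    have hpos : 0 < 2 ^ m - 1 := by omega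
    have h := hQR
    rw [Finset.range_eq_Ico, Finset.sum_eq_sum_Ico_succ_bot hpos, Nat.mul_zero, pow_zero,
      show 2 ^ m - 1 = 2 ^ m - 2 + 1 by omega, Finset.Ico_add_one_right_eq_Icc] at h
    norm_num at h
    linear_combination -h
  -- sum over Ico 1 N of F
  have hFIco : ∑ τ ∈ Finset.Ico 1 N, F τ = 3 * (-1) - 4 * ((Qz : R) - 1) := by
    rw [Finset.sum_congr rfl hFD]
    have hsplit : ∀ τ ∈ Finset.Ico 1 N,
        (if τ ∈ D then (-1 : R) else 3) * 2 ^ τ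
          = 3 * 2 ^ τ - (if τ ∈ D then (4 : R) * 2 ^ τ else 0) := by
      intro τ _
      by_cases hd : τ ∈ D <;> simp [hd] <;> ring
    rw [Finset.sum_congr rfl hsplit, Finset.sum_sub_distrib, ← Finset.sum_filter,
      Finset.filter_mem_eq_inter, Finset.inter_eq_right.mpr hDsub, ← Finset.mul_sum,
      ← Finset.mul_sum, hIco2, hDsum]
  -- total AC sum
  have hFtot : ∑ τ ∈ range N, F τ = 2 ^ (2 * m) - 4 * (Qz : R) := by
    rw [Finset.range_eq_Ico, Finset.sum_eq_sum_Ico_succ_bot hNpos, hF0, hFIco]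
    have hNR : ((N : ℕ) : R) = 2 ^ (2 * m) - 1 := by
      have h1 : N + 1 = 2 ^ (2 * m) := by
        have : 1 ≤ 2 ^ (2 * m) := Nat.one_le_two_pow
        omega
      have h2 : ((N + 1 : ℕ) : R) = ((2 ^ (2 * m) : ℕ) : R) := by rw [h1]
      push_cast at h2
      linear_combination h2
    rw [hNR]
    ring
  -- put it together and cancel the unit 2
  refine h2u.mul_left_cancel ?_
  have hpow2 : (2 : R) ^ (2 * m) = 4 * 2 ^ (2 * m - 2) := by
    rw [show 2 * m = 2 + (2 * m - 2) by omega, pow_add]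
    norm_num
  calc (2 : R) * (A * B) = ((∑ i ∈ range N, (2 : R) ^ i) - C) * B := by
        rw [← mul_assoc, h2A]
    _ = -(C * B) := by rw [hgeoR]; ring
    _ = -(2 ^ (2 * m) - 4 * (Qz : R)) := by rw [hCB, hFtot]
    _ = 2 * (-2 * (2 ^ (2 * m - 2) - (Qz : R))) := by
        rw [hpow2]; ring
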